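/- In the Weyl algebra on ℂ[ζ₁,ζ₂,ζ₃], applying (ζ₁ − (ζ₃/2)·∂/∂ζ₂)^{ℓ−k} (with k ≤ ℓ) to the polynomial ∑_{j=0}^k (1/2^j) j! C(k,j) C(ℓ,j) ζ₁^{k−j} ζ₂^{ℓ−j} ζ₃^j yields ∑_{m=0}^{ℓ} ((−1)^m/2^m) ℓ^{\underline{m}} K_m(k;ℓ) ζ₁^{ℓ−m} ζ₂^{ℓ−m} ζ₃^m, where K_m is the binary Krawtchouk polynomial. -/

import Mathlib

open Finset MvPolynomial

/-- Falling factorial `r(r-1)⋯(r-j+1)`. -/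
noncomputable def fallFac (r : ℂ) (j : ℕ) : ℂ := (descPochhammer ℂ j).eval r

/-- Generalized binomial coefficient. -/
noncomputable def gchoose (a : ℂ) (k : ℕ) : ℂ := fallFac a k / (k.factorial : ℂ)

/-- Binary Krawtchouk polynomial. -/
noncomputable def Kraw (m : ℕ) (x y : ℂ) : ℂ :=
  ∑ j ∈ range (m + 1), (-1 : ℂ) ^ j * gchoose x j * gchoose (y - x) (m - j)

/-- The Weyl-algebra operator `ζ₁ − (ζ₃/2)·∂/∂ζ₂` acting on `ℂ[ζ₁,ζ₂,ζ₃]`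
(variables indexed `0, 1, 2`). -/
noncomputable def weylOp' (p : MvPolynomial (Fin 3) ℂ) : MvPolynomial (Fin 3) ℂ :=
  X 0 * p - C (1 / 2 : ℂ) * X 2 * pderiv 1 p


/-- Auxiliary integer coefficients. -/
def bco (k : ℕ) : ℕ → ℕ → ℤ
  | 0, j => k.choose j
  | n+1, 0 => bco k n 0
  | n+1, j+1 => bco k n (j+1) - bco k n j

noncomputable def aco (k ℓ n j : ℕ) : ℂ :=
  (1 / 2^j) * (j.factorial : ℂ) * (ℓ.choose j : ℂ) * (bco k n j : ℂ)

lemma bco_zero_right (k n : ℕ) : bco k n 0 = 1 := by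
  induction n with
  | zero => simp [bco]
  | succ n ih => simpa [bco] using ih

lemma bco_vanish (k : ℕ) : ∀ n j, k + n < j → bco k n j = 0 := by
  intro n
  induction n with
  | zero =>
    intro j hj
    have : k < j := by omega
    simp [bco, Nat.choose_eq_zero_of_lt this]
  | succ n ih =>
    intro j hj
    match j, hj with
    | j+1, hj =>
      rw [bco, ih (j+1) (by omega), ih j (by omega), sub_zero]

lemma bco_closed (k : ℕ) : ∀ n m, bco k n m =
    ∑ i ∈ range (m+1), (-1)^i * (n.choose i : ℤ) * (k.choose (m-i) : ℤ) := by
  intro n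
  induction n with
  | zero =>
    intro m
    rw [Finset.sum_eq_single 0]
    · simp [bco]
    · intro i _ hi
      match i, hi with
      | i+1, _ => simp
    · simp
  | succ n ih =>
    intro m
    match m with
    | 0 => simp [bco, bco_zero_right]
    | m+1 =>
      have e1 := Finset.sum_range_succ' (fun i => (-1:ℤ)^i * ((n+1).choose i : ℤ) * (k.choose (m+1-i) : ℤ)) (m+1)
      have e2 := Finset.sum_range_succ' (fun i => (-1:ℤ)^i * (n.choose i : ℤ) * (k.choose (m+1-i) : ℤ)) (m+1)
      rw [bco, ih, ih, e1, e2]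
      have hAB : (∑ i ∈ range (m+1), (-1:ℤ)^(i+1) * (n.choose (i+1) : ℤ) * (k.choose (m+1-(i+1)) : ℤ))
          - ∑ i ∈ range (m+1), (-1:ℤ)^i * (n.choose i : ℤ) * (k.choose (m-i) : ℤ)
          = ∑ i ∈ range (m+1), (-1:ℤ)^(i+1) * ((n+1).choose (i+1) : ℤ) * (k.choose (m+1-(i+1)) : ℤ) := by
        rw [← Finset.sum_sub_distrib]
        refine Finset.sum_congr rfl ?_
        intro i hi
        have hmi : m + 1 - (i+1) = m - i := by omega
        have hp : ((n+1).choose (i+1) : ℤ) = (n.choose (i+1) : ℤ) + (n.choose i : ℤ) := by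
          rw [Nat.choose_succ_succ]; push_cast; ring
        rw [hmi, hp, pow_succ]
        ring
      simp only [Nat.choose_zero_right, Nat.cast_one]
      linear_combination hAB

lemma aco_rec0 (k ℓ n : ℕ) : aco k ℓ (n+1) 0 = aco k ℓ n 0 := by
  simp [aco, bco]

lemma aco_rec (k ℓ n j : ℕ) :
    aco k ℓ (n+1) (j+1) = aco k ℓ n (j+1) - (((ℓ - j : ℕ) : ℂ)/2) * aco k ℓ n j := by
  have key : ((j+1).factorial : ℂ) * (ℓ.choose (j+1) : ℂ) = ((ℓ - j : ℕ) : ℂ) * (j.factorial : ℂ) * (ℓ.choose j : ℂ) := by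
    have h := Nat.choose_succ_right_eq ℓ j
    have hn : (j+1).factorial * ℓ.choose (j+1) = (ℓ - j) * (j.factorial * ℓ.choose j) := by
      rw [Nat.factorial_succ]
      calc (j+1) * j.factorial * ℓ.choose (j+1) = j.factorial * (ℓ.choose (j+1) * (j+1)) := by ring
        _ = j.factorial * (ℓ.choose j * (ℓ - j)) := by rw [h]
        _ = (ℓ - j) * (j.factorial * ℓ.choose j) := by ring
    calc ((j+1).factorial : ℂ) * (ℓ.choose (j+1) : ℂ) = (((j+1).factorial * ℓ.choose (j+1) : ℕ) : ℂ) := by push_cast; ring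
      _ = (((ℓ - j) * (j.factorial * ℓ.choose j) : ℕ) : ℂ) := by rw [hn]
      _ = _ := by push_cast; ring
  simp only [aco, bco]
  push_cast
  linear_combination (-(bco k n j : ℂ)/2^(j+1)) * key

lemma pderiv_term (c : ℂ) (a b j : ℕ) :
    pderiv 1 (C c * X 0 ^ a * X 1 ^ b * X 2 ^ j : MvPolynomial (Fin 3) ℂ)
      = C ((b : ℂ) * c) * X 0 ^ a * X 1 ^ (b-1) * X 2 ^ j := by
  simp [pderiv_mul, pderiv_C, pderiv_X_self, pderiv_X_of_ne, map_mul]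
  push_cast
  ring

lemma main_ind (k ℓ : ℕ) (n : ℕ) :
    weylOp'^[n] (∑ j ∈ range (ℓ+1), C (aco k ℓ 0 j) * X 0 ^ (k - j) * X 1 ^ (ℓ - j) * X 2 ^ j)
    = ∑ j ∈ range (ℓ+1), C (aco k ℓ n j) * X 0 ^ (k + n - j) * X 1 ^ (ℓ - j) * X 2 ^ j := by
  induction n with
  | zero => simp
  | succ n ih =>
    rw [Function.iterate_succ_apply', ih]
    have stepA : weylOp' (∑ j ∈ range (ℓ+1), C (aco k ℓ n j) * X 0 ^ (k + n - j) * X 1 ^ (ℓ - j) * X 2 ^ j)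
        = (∑ j ∈ range (ℓ+1), C (aco k ℓ n j) * X 0 ^ (k + n - j + 1) * X 1 ^ (ℓ - j) * X 2 ^ j)
          - ∑ j ∈ range (ℓ+1), C ((((ℓ - j : ℕ) : ℂ)/2) * aco k ℓ n j) * X 0 ^ (k + n - j) * X 1 ^ (ℓ - j - 1) * X 2 ^ (j+1) := by
      rw [weylOp']
      rw [map_sum (pderiv 1) (fun j => C (aco k ℓ n j) * X 0 ^ (k + n - j) * X 1 ^ (ℓ - j) * X 2 ^ j) (range (ℓ+1))]
      calc (X 0 : MvPolynomial (Fin 3) ℂ) * (∑ j ∈ range (ℓ+1), C (aco k ℓ n j) * X 0 ^ (k + n - j) * X 1 ^ (ℓ - j) * X 2 ^ j)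
            - C (1/2 : ℂ) * X 2 * ∑ j ∈ range (ℓ+1), pderiv 1 (C (aco k ℓ n j) * X 0 ^ (k + n - j) * X 1 ^ (ℓ - j) * X 2 ^ j)
          = ∑ j ∈ range (ℓ+1), (X 0 * (C (aco k ℓ n j) * X 0 ^ (k + n - j) * X 1 ^ (ℓ - j) * X 2 ^ j)
              - C (1/2 : ℂ) * X 2 * pderiv 1 (C (aco k ℓ n j) * X 0 ^ (k + n - j) * X 1 ^ (ℓ - j) * X 2 ^ j)) := by
            rw [Finset.sum_sub_distrib, Finset.mul_sum, Finset.mul_sum]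
        _ = ∑ j ∈ range (ℓ+1), (C (aco k ℓ n j) * X 0 ^ (k + n - j + 1) * X 1 ^ (ℓ - j) * X 2 ^ j
              - C ((((ℓ - j : ℕ) : ℂ)/2) * aco k ℓ n j) * X 0 ^ (k + n - j) * X 1 ^ (ℓ - j - 1) * X 2 ^ (j+1)) := by
            refine Finset.sum_congr rfl ?_
            intro j _
            rw [pderiv_term]
            rw [show ((((ℓ - j : ℕ) : ℂ)/2) * aco k ℓ n j) = (1/2 : ℂ) * (((ℓ - j : ℕ) : ℂ) * aco k ℓ n j) by ring, map_mul, map_mul, map_mul]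
            ring
        _ = _ := Finset.sum_sub_distrib _ _
    rw [stepA]
    -- peel last term of the second sum (it is zero)
    rw [Finset.sum_range_succ (fun j => C ((((ℓ - j : ℕ) : ℂ)/2) * aco k ℓ n j) * X 0 ^ (k + n - j) * X 1 ^ (ℓ - j - 1) * X 2 ^ (j+1)) ℓ]
    simp only [Nat.sub_self, Nat.cast_zero, zero_div, zero_mul, map_zero, add_zero]
    -- peel first terms
    rw [Finset.sum_range_succ' (fun j => C (aco k ℓ n j) * X 0 ^ (k + n - j + 1) * X 1 ^ (ℓ - j) * X 2 ^ j) ℓ]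
    rw [Finset.sum_range_succ' (fun j => C (aco k ℓ (n+1) j) * X 0 ^ (k + (n+1) - j) * X 1 ^ (ℓ - j) * X 2 ^ j) ℓ]
    rw [add_sub_right_comm, ← Finset.sum_sub_distrib]
    congr 1
    · refine Finset.sum_congr rfl ?_
      intro i _
      have he2 : k + (n+1) - (i+1) = k + n - i := by omega
      have he3 : ℓ - i - 1 = ℓ - (i+1) := by omega
      rw [he2, he3, aco_rec]
      by_cases hle : i + 1 ≤ k + n
      · have he1 : k + n - (i+1) + 1 = k + n - i := by omega
        rw [he1, map_sub]
        ring
      · have h0 : aco k ℓ n (i+1) = 0 := by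
          simp [aco, bco_vanish k n (i+1) (by omega)]
        rw [h0, zero_sub, map_neg, map_zero, zero_mul, zero_mul, zero_mul, zero_sub]
        ring

lemma fallFac_nat (a j : ℕ) : fallFac (a : ℂ) j = ((j.factorial * a.choose j : ℕ) : ℂ) := by
  rw [fallFac, descPochhammer_eval_eq_descFactorial, Nat.descFactorial_eq_factorial_mul_choose]

lemma gchoose_nat (a j : ℕ) : gchoose (a : ℂ) j = (a.choose j : ℂ) := by
  rw [gchoose, fallFac_nat]
  push_cast
  have hf : (j.factorial : ℂ) ≠ 0 := by exact_mod_cast j.factorial_ne_zero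
  exact mul_div_cancel_left₀ _ hf

lemma reflect_sum (A B m : ℕ) :
    (∑ i ∈ range (m+1), (-1:ℂ)^i * (A.choose i : ℂ) * (B.choose (m-i) : ℂ))
      = (-1:ℂ)^m * ∑ j ∈ range (m+1), (-1:ℂ)^j * (B.choose j : ℂ) * (A.choose (m-j) : ℂ) := by
  rw [← Finset.sum_range_reflect (fun i => (-1:ℂ)^i * (A.choose i : ℂ) * (B.choose (m-i) : ℂ)) (m+1)]
  rw [Finset.mul_sum]
  refine Finset.sum_congr rfl ?_
  intro j hj
  have hjm : j ≤ m := by simpa [Nat.lt_succ_iff] using hj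
  have h1 : m + 1 - 1 - j = m - j := by omega
  have h2 : m - (m - j) = j := by omega
  have h3 : (-1:ℂ)^(m-j) = (-1:ℂ)^m * (-1:ℂ)^j := by
    rw [← pow_add, show m + j = (m - j) + 2*j by omega, pow_add, pow_mul, neg_one_sq, one_pow, mul_one]
  rw [h1, h2, h3]
  ring

lemma final_coef (k ℓ m : ℕ) (h : k ≤ ℓ) :
    aco k ℓ (ℓ - k) m = ((-1 : ℂ) ^ m / 2 ^ m) * fallFac (ℓ : ℂ) m * Kraw m (k : ℂ) (ℓ : ℂ) := by
  have hK : Kraw m (k : ℂ) (ℓ : ℂ)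
      = ∑ j ∈ range (m+1), (-1:ℂ)^j * (k.choose j : ℂ) * ((ℓ-k).choose (m-j) : ℂ) := by
    rw [Kraw]
    refine Finset.sum_congr rfl ?_
    intro j _
    rw [show ((ℓ:ℂ) - (k:ℂ)) = (((ℓ - k : ℕ)) : ℂ) by push_cast [h]; ring, gchoose_nat, gchoose_nat]
  have hb : ((bco k (ℓ-k) m : ℤ) : ℂ)
      = (-1:ℂ)^m * ∑ j ∈ range (m+1), (-1:ℂ)^j * (k.choose j : ℂ) * ((ℓ-k).choose (m-j) : ℂ) := by
    rw [bco_closed]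
    push_cast
    exact reflect_sum (ℓ-k) k m
  rw [aco, hb, hK, fallFac_nat]
  push_cast
  ring


lemma init_sum (k ℓ : ℕ) (h : k ≤ ℓ) :
    (∑ j ∈ range (k + 1),
        C ((1 / 2 ^ j : ℂ) * (j.factorial : ℂ) * (k.choose j : ℂ) * (ℓ.choose j : ℂ)) *
          X 0 ^ (k - j) * X 1 ^ (ℓ - j) * X 2 ^ j : MvPolynomial (Fin 3) ℂ)
    = ∑ j ∈ range (ℓ+1), C (aco k ℓ 0 j) * X 0 ^ (k - j) * X 1 ^ (ℓ - j) * X 2 ^ j := by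
  have h1 : ∀ j ∈ range (k+1),
      (C ((1 / 2 ^ j : ℂ) * (j.factorial : ℂ) * (k.choose j : ℂ) * (ℓ.choose j : ℂ)) *
          X 0 ^ (k - j) * X 1 ^ (ℓ - j) * X 2 ^ j : MvPolynomial (Fin 3) ℂ)
        = C (aco k ℓ 0 j) * X 0 ^ (k - j) * X 1 ^ (ℓ - j) * X 2 ^ j := by
    intro j _
    have : aco k ℓ 0 j = (1 / 2 ^ j : ℂ) * (j.factorial : ℂ) * (k.choose j : ℂ) * (ℓ.choose j : ℂ) := by
      simp only [aco, bco]
      push_cast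
      ring
    rw [this]
  refine (Finset.sum_congr rfl h1).trans ?_
  refine Finset.sum_subset (Finset.range_subset_range.mpr (by omega)) ?_
  intro j hj hnj
  have hkj : k < j := by simp at hnj; omega
  have : aco k ℓ 0 j = 0 := by
    simp [aco, bco, Nat.choose_eq_zero_of_lt hkj]
  rw [this]
  simp

/-- For `k ≤ ℓ`, applying `(ζ₁ − (ζ₃/2)∂/∂ζ₂)^{ℓ−k}` to
`∑_{j=0}^k (1/2^j) j! C(k,j) C(ℓ,j) ζ₁^{k−j} ζ₂^{ℓ−j} ζ₃^j` yields
`∑_{m=0}^ℓ ((−1)^m/2^m) ℓ^{\underline m} K_m(k;ℓ) ζ₁^{ℓ−m} ζ₂^{ℓ−m} ζ₃^m`. -/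
theorem weylOp'_iterate (k ℓ : ℕ) (h : k ≤ ℓ) :
    weylOp'^[ℓ - k]
        (∑ j ∈ range (k + 1),
          C ((1 / 2 ^ j : ℂ) * (j.factorial : ℂ) * (k.choose j : ℂ) * (ℓ.choose j : ℂ)) *
            X 0 ^ (k - j) * X 1 ^ (ℓ - j) * X 2 ^ j) =
      ∑ m ∈ range (ℓ + 1),
        C (((-1 : ℂ) ^ m / 2 ^ m) * fallFac (ℓ : ℂ) m * Kraw m (k : ℂ) (ℓ : ℂ)) *
          X 0 ^ (ℓ - m) * X 1 ^ (ℓ - m) * X 2 ^ m := by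
  rw [init_sum k ℓ h, main_ind k ℓ (ℓ - k)]
  refine Finset.sum_congr rfl ?_
  intro m _
  rw [show k + (ℓ - k) - m = ℓ - m by omega, final_coef k ℓ m h]
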